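/- Caccioppoli-type identity for A-harmonic functions (Lemma 3.11, with the A-harmonicity hypothesis stated as orthogonality against the test functions η²v and η²u): if ∫_Ω ⟨A(x) ∇u(x), ∇(η²·v)(x)⟩ dx = 0 and ∫_Ω ⟨A(x) ∇v(x), ∇(η²·u)(x)⟩ dx = 0, then ∫_Ω ⟨A(x) ∇(η·u)(x), ∇(η·v)(x)⟩ dx = ∫_Ω ⟨A(x) ∇η(x), ∇η(x)⟩ · u(x) · v(x) dx. -/

import Mathlib

open MeasureTheory
open scoped RealInnerProductSpace

lemma gradient_mul {d : ℕ} (f g : EuclideanSpace ℝ (Fin d) → ℝ)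
    (x : EuclideanSpace ℝ (Fin d)) (hf : DifferentiableAt ℝ f x)
    (hg : DifferentiableAt ℝ g x) :
    gradient (fun y => f y * g y) x = f x • gradient g x + g x • gradient f x := by
  unfold gradient
  rw [fderiv_fun_mul hf hg, map_add, _root_.map_smul, _root_.map_smul]

/-- Caccioppoli-type identity for `A`-harmonic functions (Lemma 3.11, with the
`A`-harmonicity hypothesis stated as orthogonality against the test functions `η²v`
and `η²u`): `∫_Ω ⟨A ∇(ηu), ∇(ηv)⟩ = ∫_Ω ⟨A ∇η, ∇η⟩ u v`. -/
theorem caccioppoli_identity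
    (d : ℕ) (Ω : Set (EuclideanSpace ℝ (Fin d))) (hΩ : IsOpen Ω)
    (A : EuclideanSpace ℝ (Fin d) → (EuclideanSpace ℝ (Fin d) →L[ℝ] EuclideanSpace ℝ (Fin d)))
    (hA : ∀ᵐ x ∂(volume.restrict Ω), ∀ ξ ζ : EuclideanSpace ℝ (Fin d), ⟪A x ξ, ζ⟫ = ⟪ξ, A x ζ⟫)
    (u v η : EuclideanSpace ℝ (Fin d) → ℝ)
    (hu : ∀ x ∈ Ω, DifferentiableAt ℝ u x)
    (hv : ∀ x ∈ Ω, DifferentiableAt ℝ v x)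
    (hη : ∀ x ∈ Ω, DifferentiableAt ℝ η x)
    (hint1 : IntegrableOn (fun x =>
      ⟪A x (gradient (fun y => η y * u y) x), gradient (fun y => η y * v y) x⟫) Ω)
    (hint2 : IntegrableOn (fun x =>
      ⟪A x (gradient η x), gradient η x⟫ * u x * v x) Ω)
    (hint3 : IntegrableOn (fun x =>
      ⟪A x (gradient u x), gradient (fun y => (η y) ^ 2 * v y) x⟫) Ω)
    (hint4 : IntegrableOn (fun x =>
      ⟪A x (gradient v x), gradient (fun y => (η y) ^ 2 * u y) x⟫) Ω)
    (horth1 : ∫ x in Ω, ⟪A x (gradient u x), gradient (fun y => (η y) ^ 2 * v y) x⟫ = 0)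
    (horth2 : ∫ x in Ω, ⟪A x (gradient v x), gradient (fun y => (η y) ^ 2 * u y) x⟫ = 0) :
    ∫ x in Ω, ⟪A x (gradient (fun y => η y * u y) x), gradient (fun y => η y * v y) x⟫ =
      ∫ x in Ω, ⟪A x (gradient η x), gradient η x⟫ * u x * v x := by
  have key : ∀ᵐ x ∂(volume.restrict Ω),
      ⟪A x (gradient (fun y => η y * u y) x), gradient (fun y => η y * v y) x⟫ =
      ⟪A x (gradient η x), gradient η x⟫ * u x * v x
        + (2 : ℝ)⁻¹ * ⟪A x (gradient u x), gradient (fun y => (η y) ^ 2 * v y) x⟫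
        + (2 : ℝ)⁻¹ * ⟪A x (gradient v x), gradient (fun y => (η y) ^ 2 * u y) x⟫ := by
    filter_upwards [hA, ae_restrict_mem hΩ.measurableSet] with x hsym hx
    have hux := hu x hx
    have hvx := hv x hx
    have hηx := hη x hx
    have hη2 : DifferentiableAt ℝ (fun y => (η y) ^ 2) x := by
      simpa [sq] using hηx.fun_mul hηx
    have g1 : gradient (fun y => η y * u y) x
        = η x • gradient u x + u x • gradient η x := gradient_mul η u x hηx hux
    have g2 : gradient (fun y => η y * v y) x
        = η x • gradient v x + v x • gradient η x := gradient_mul η v x hηx hvx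
    have gη2 : gradient (fun y => (η y) ^ 2) x = (2 * η x) • gradient η x := by
      have := gradient_mul η η x hηx hηx
      rw [show (fun y => (η y) ^ 2) = fun y => η y * η y by ext y; ring, this]
      module
    have g3 : gradient (fun y => (η y) ^ 2 * v y) x
        = ((η x) ^ 2) • gradient v x + (v x * (2 * η x)) • gradient η x := by
      rw [gradient_mul (fun y => (η y) ^ 2) v x hη2 hvx, gη2]
      module
    have g4 : gradient (fun y => (η y) ^ 2 * u y) x
        = ((η x) ^ 2) • gradient u x + (u x * (2 * η x)) • gradient η x := by
      rw [gradient_mul (fun y => (η y) ^ 2) u x hη2 hux, gη2]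
      module
    rw [g1, g2, g3, g4]
    simp only [_root_.map_add, _root_.map_smul, ContinuousLinearMap.map_smul, inner_add_left, inner_add_right,
      real_inner_smul_left, real_inner_smul_right]
    have e1 : ⟪A x (gradient v x), gradient u x⟫ = ⟪A x (gradient u x), gradient v x⟫ := by
      rw [hsym, real_inner_comm]
    have e2 : ⟪A x (gradient v x), gradient η x⟫ = ⟪A x (gradient η x), gradient v x⟫ := by
      rw [hsym, real_inner_comm]
    rw [e1, e2]
    ring
  calc ∫ x in Ω, ⟪A x (gradient (fun y => η y * u y) x), gradient (fun y => η y * v y) x⟫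
      = ∫ x in Ω, (⟪A x (gradient η x), gradient η x⟫ * u x * v x
        + (2 : ℝ)⁻¹ * ⟪A x (gradient u x), gradient (fun y => (η y) ^ 2 * v y) x⟫
        + (2 : ℝ)⁻¹ * ⟪A x (gradient v x), gradient (fun y => (η y) ^ 2 * u y) x⟫) :=
        integral_congr_ae key
    _ = ∫ x in Ω, ⟪A x (gradient η x), gradient η x⟫ * u x * v x := by
        have h3 : IntegrableOn (fun x =>
            (2 : ℝ)⁻¹ * ⟪A x (gradient u x), gradient (fun y => (η y) ^ 2 * v y) x⟫) Ω :=
          hint3.const_mul _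
        have h4 : IntegrableOn (fun x =>
            (2 : ℝ)⁻¹ * ⟪A x (gradient v x), gradient (fun y => (η y) ^ 2 * u y) x⟫) Ω :=
          hint4.const_mul _
        have h23 : IntegrableOn (fun x =>
            ⟪A x (gradient η x), gradient η x⟫ * u x * v x
            + (2 : ℝ)⁻¹ * ⟪A x (gradient u x), gradient (fun y => (η y) ^ 2 * v y) x⟫) Ω :=
          hint2.add h3
        rw [integral_add h23 h4, integral_add hint2 h3, integral_const_mul, integral_const_mul,
          horth1, horth2]
        ring
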